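/- Let Ω ⊆ ℂ^d be open connected and X ⊆ H(Ω) a completely metrizable topological vector space in which convergence implies pointwise convergence on Ω. Fix open balls B₁ ⊆ cl(B₁) ⊆ B₂ ∩ Ω with B₂ ∩ Ω ≠ ∅, B₂ ∩ Ωᶜ ≠ ∅, and M ≥ 1. Then the set T(B₁,B₂,M) = {f ∈ X : there exists holomorphic F on B₂ with |F| ≤ M and F = f on B₁} is closed in X. -/

import Mathlib

open Metric Set Filter Topology

lemma oneD {φ : ℂ → ℂ} {ρ M : ℝ} (hρ : 1 < ρ) (hM : 0 ≤ M)
    (hd : DifferentiableOn ℂ φ (ball 0 ρ))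
    (hb : ∀ t ∈ ball (0:ℂ) ρ, ‖φ t‖ ≤ M) :
    ‖deriv φ 0‖ ≤ (2*M+1)/ρ ∧ ‖φ 1 - φ 0 - deriv φ 0‖ ≤ (4*M+3)/ρ^2 := by
  have hρ0 : (0:ℝ) < ρ := lt_trans one_pos hρ
  have h0mem : (0:ℂ) ∈ ball (0:ℂ) ρ := mem_ball_self hρ0
  have h1mem : (1:ℂ) ∈ ball (0:ℂ) ρ := by
    simp only [mem_ball, dist_zero_right, norm_one]; exact hρ
  have hmaps1 : MapsTo φ (ball (0:ℂ) ρ) (ball (φ 0) (2*M+1)) := by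
    intro t ht
    rw [mem_ball, dist_eq_norm]
    calc ‖φ t - φ 0‖ ≤ ‖φ t‖ + ‖φ 0‖ := norm_sub_le _ _
      _ ≤ M + M := add_le_add (hb t ht) (hb 0 h0mem)
      _ < 2*M+1 := by linarith
  have hdb : ‖deriv φ 0‖ ≤ (2*M+1)/ρ :=
    Complex.norm_deriv_le_div_of_mapsTo_ball hd (hmaps1.mono_right ball_subset_closedBall) hρ0
  refine ⟨hdb, ?_⟩
  set d : ℂ := deriv φ 0 with hddef
  set ψ : ℂ → ℂ := fun t => φ t - φ 0 - t * d with hψdef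
  have hψd : DifferentiableOn ℂ ψ (ball 0 ρ) :=
    (hd.sub_const _).sub ((differentiable_id.mul_const d).differentiableOn)
  have hψ0 : ψ 0 = 0 := by simp [hψdef]
  have hφ' : HasDerivAt φ d 0 :=
    (hd.differentiableAt (isOpen_ball.mem_nhds h0mem)).hasDerivAt
  have hψ' : HasDerivAt ψ 0 0 := by
    have := (hφ'.sub_const (φ 0)).sub (hasDerivAt_mul_const (x := (0:ℂ)) d)
    simp only [sub_self] at this; exact this
  have hψderiv0 : deriv ψ 0 = 0 := hψ'.deriv
  have hψb : ∀ t ∈ ball (0:ℂ) ρ, ‖ψ t‖ ≤ 4*M+1 := by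
    intro t ht
    have ht' : ‖t‖ < ρ := by simpa [mem_ball, dist_zero_right] using ht
    have htd : ‖t * d‖ ≤ 2*M+1 := by
      rw [norm_mul]
      calc ‖t‖ * ‖d‖ ≤ ρ * ((2*M+1)/ρ) :=
            mul_le_mul ht'.le hdb (norm_nonneg _) hρ0.le
        _ = 2*M+1 := by field_simp
    calc ‖ψ t‖ ≤ ‖φ t - φ 0‖ + ‖t * d‖ := norm_sub_le _ _
      _ ≤ (‖φ t‖ + ‖φ 0‖) + (2*M+1) := add_le_add (norm_sub_le _ _) htd
      _ ≤ (M + M) + (2*M+1) := by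
          exact add_le_add (add_le_add (hb t ht) (hb 0 h0mem)) le_rfl
      _ = 4*M+1 := by ring
  have hmaps2 : MapsTo ψ (ball (0:ℂ) ρ) (ball (ψ 0) (4*M+2)) := by
    intro t ht
    rw [mem_ball, dist_eq_norm, hψ0, sub_zero]
    exact lt_of_le_of_lt (hψb t ht) (by linarith)
  set η : ℂ → ℂ := dslope ψ 0 with hηdef
  have hη0 : η 0 = 0 := by rw [hηdef, dslope_same, hψderiv0]
  have hηb : ∀ t ∈ ball (0:ℂ) ρ, ‖η t‖ ≤ (4*M+2)/ρ := fun t ht =>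
    Complex.norm_dslope_le_div_of_mapsTo_ball hψd (hmaps2.mono_right ball_subset_closedBall) ht
  have hηd : DifferentiableOn ℂ η (ball 0 ρ) :=
    (Complex.differentiableOn_dslope (isOpen_ball.mem_nhds h0mem)).mpr hψd
  have hmaps3 : MapsTo η (ball (0:ℂ) ρ) (ball (η 0) ((4*M+3)/ρ)) := by
    intro t ht
    rw [mem_ball, dist_eq_norm, hη0, sub_zero]
    exact lt_of_le_of_lt (hηb t ht) (by gcongr <;> linarith)
  have key := Complex.dist_le_div_mul_dist_of_mapsTo_ball hηd (hmaps3.mono_right ball_subset_closedBall) h1mem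
  have hη1 : η 1 = ψ 1 := by
    rw [hηdef, dslope_of_ne ψ one_ne_zero, slope_def_field]
    simp [hψ0]
  have hψ1 : ψ 1 = φ 1 - φ 0 - d := by simp [hψdef]
  rw [hη1, hψ1, hη0, dist_eq_norm, sub_zero] at key
  calc ‖φ 1 - φ 0 - d‖ ≤ (4*M+3)/ρ/ρ * dist (1:ℂ) 0 := key
    _ = (4*M+3)/ρ^2 := by
        rw [dist_zero_right, norm_one, mul_one, div_div, ← pow_two]

lemma sliceQuad {E : Type*} [NormedAddCommGroup E] [NormedSpace ℂ E] {G : E → ℂ} {z : E}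
    {R M : ℝ} (hR : 0 < R) (hM : 0 ≤ M) (hd : DifferentiableOn ℂ G (ball z R))
    (hb : ∀ w ∈ ball z R, ‖G w‖ ≤ M) {h : E} (hh : ‖h‖ < R) (hh0 : h ≠ 0) :
    ‖fderiv ℂ G z h‖ ≤ (2*M+1)/(R/‖h‖) ∧
    ‖G (z + h) - G z - fderiv ℂ G z h‖ ≤ (4*M+3)/(R/‖h‖)^2 := by
  have hn0 : (0:ℝ) < ‖h‖ := norm_pos_iff.mpr hh0
  set ρ : ℝ := R / ‖h‖ with hρdef
  have hρ : 1 < ρ := (one_lt_div hn0).mpr hh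
  set L : ℂ → E := fun t => z + t • h with hLdef
  have hLmaps : ∀ t ∈ ball (0:ℂ) ρ, L t ∈ ball z R := by
    intro t ht
    have ht' : ‖t‖ < ρ := by simpa [mem_ball, dist_zero_right] using ht
    rw [mem_ball, dist_eq_norm]
    have : ‖z + t • h - z‖ = ‖t‖ * ‖h‖ := by rw [add_sub_cancel_left, norm_smul]
    rw [hLdef]
    simp only []
    rw [this]
    calc ‖t‖ * ‖h‖ < ρ * ‖h‖ := by gcongr
      _ = R := div_mul_cancel₀ R hn0.ne'
  have hL : Differentiable ℂ L := (differentiable_id.smul_const h).const_add z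
  set φ : ℂ → ℂ := fun t => G (L t) with hφdef
  have hφd : DifferentiableOn ℂ φ (ball 0 ρ) :=
    hd.comp hL.differentiableOn (fun t ht => hLmaps t ht)
  have hφb : ∀ t ∈ ball (0:ℂ) ρ, ‖φ t‖ ≤ M := fun t ht => hb _ (hLmaps t ht)
  have hG : HasFDerivAt G (fderiv ℂ G z) z :=
    (hd.differentiableAt (isOpen_ball.mem_nhds (mem_ball_self hR))).hasFDerivAt
  have hL0 : HasDerivAt L h 0 := by
    have := ((hasDerivAt_id (0:ℂ)).smul_const h).const_add z
    convert this using 1 <;> simp [hLdef]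
  have hG' : HasFDerivAt G (fderiv ℂ G z) (L 0) := by
    have : L 0 = z := by simp [hLdef]
    rw [this]; exact hG
  have hφ' : HasDerivAt φ (fderiv ℂ G z h) 0 := hG'.comp_hasDerivAt 0 hL0
  have hderiv : deriv φ 0 = fderiv ℂ G z h := hφ'.deriv
  obtain ⟨k1, k2⟩ := oneD hρ hM hφd hφb
  rw [hderiv] at k1 k2
  have hφ1 : φ 1 = G (z + h) := by simp [hφdef, hLdef]
  have hφ0 : φ 0 = G z := by simp [hφdef, hLdef]
  rw [hφ1, hφ0] at k2
  exact ⟨k1, k2⟩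

lemma opnormBound {E : Type*} [NormedAddCommGroup E] [NormedSpace ℂ E] {G : E → ℂ} {z : E}
    {R M : ℝ} (hR : 0 < R) (hM : 0 ≤ M) (hd : DifferentiableOn ℂ G (ball z R))
    (hb : ∀ w ∈ ball z R, ‖G w‖ ≤ M) :
    ‖fderiv ℂ G z‖ ≤ (2*M+1)/R := by
  apply ContinuousLinearMap.opNorm_le_of_ball hR (by positivity)
  intro h hh
  rcases eq_or_ne h 0 with rfl | hh0
  · simp
  have hh' : ‖h‖ < R := by simpa [mem_ball, dist_zero_right] using hh
  have := (sliceQuad hR hM hd hb hh' hh0).1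
  calc ‖fderiv ℂ G z h‖ ≤ (2*M+1)/(R/‖h‖) := this
    _ = (2*M+1)/R * ‖h‖ := by
        rw [div_div_eq_mul_div, div_mul_eq_mul_div, mul_comm]

theorem stmt5 {d : ℕ} (Ω : Set (EuclideanSpace ℂ (Fin d)))
    (hΩo : IsOpen Ω) (hΩc : IsConnected Ω)
    (X : Type*) [AddCommGroup X] [Module ℂ X] [MetricSpace X] [CompleteSpace X]
    [IsTopologicalAddGroup X] [ContinuousSMul ℂ X]
    (ι : X →ₗ[ℂ] (EuclideanSpace ℂ (Fin d) → ℂ)) (hinj : Function.Injective ι)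
    (hholo : ∀ f : X, DifferentiableOn ℂ (ι f) Ω)
    (hptw : ∀ (g : ℕ → X) (f : X), Tendsto g atTop (nhds f) →
      ∀ z ∈ Ω, Tendsto (fun n => ι (g n) z) atTop (nhds (ι f z)))
    (c₁ c₂ : EuclideanSpace ℂ (Fin d)) (r₁ r₂ : ℝ) (hr₁ : 0 < r₁) (hr₂ : 0 < r₂)
    (hsub : closedBall c₁ r₁ ⊆ ball c₂ r₂ ∩ Ω)
    (h1 : (ball c₂ r₂ ∩ Ω).Nonempty) (h2 : (ball c₂ r₂ ∩ Ωᶜ).Nonempty)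
    (M : ℝ) (hM : 1 ≤ M) :
    IsClosed {f : X | ∃ F : EuclideanSpace ℂ (Fin d) → ℂ,
      DifferentiableOn ℂ F (ball c₂ r₂) ∧
      (∀ z ∈ ball c₂ r₂, ‖F z‖ ≤ M) ∧
      EqOn F (ι f) (ball c₁ r₁)} := by
  have hM0 : (0:ℝ) ≤ M := le_trans zero_le_one hM
  rw [← isSeqClosed_iff_isClosed]
  intro g f hmem htend
  choose Fn hFd hFb hFeq using hmem
  set 𝒰 : Ultrafilter ℕ := Ultrafilter.of atTop with h𝒰def
  have h𝒰 : (𝒰 : Filter ℕ) ≤ atTop := Ultrafilter.of_le _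
  -- define the limit function
  have hex : ∀ z : EuclideanSpace ℂ (Fin d), ∃ a : ℂ, ‖a‖ ≤ M ∧
      (z ∈ ball c₂ r₂ → Tendsto (fun n => Fn n z) (𝒰 : Filter ℕ) (𝓝 a)) := by
    intro z
    by_cases hz : z ∈ ball c₂ r₂
    · obtain ⟨a, haM, ha⟩ := (isCompact_closedBall (0:ℂ) M).ultrafilter_le_nhds
        (𝒰.map fun n => Fn n z)
        (by
          rw [Ultrafilter.coe_map, le_principal_iff, mem_map]
          exact univ_mem' fun n => mem_closedBall_zero_iff.mpr (hFb n z hz))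
      exact ⟨a, mem_closedBall_zero_iff.mp haM, fun _ => ha⟩
    · exact ⟨0, by simpa using hM0, fun h => absurd h hz⟩
  choose F hFle hFt using hex
  refine ⟨F, ?_, fun z _ => hFle z, ?_⟩
  · -- differentiability
    intro z₀ hz₀
    refine DifferentiableAt.differentiableWithinAt ?_
    set R : ℝ := r₂ - dist z₀ c₂ with hRdef
    have hR : 0 < R := sub_pos.mpr (mem_ball.mp hz₀)
    have hball : ball z₀ R ⊆ ball c₂ r₂ := ball_subset_ball' (by rw [hRdef]; ring_nf; rfl)
    have hdn : ∀ n, DifferentiableOn ℂ (Fn n) (ball z₀ R) := fun n => (hFd n).mono hball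
    have hbn : ∀ n, ∀ w ∈ ball z₀ R, ‖Fn n w‖ ≤ M := fun n w hw => hFb n w (hball hw)
    set Dn : ℕ → (EuclideanSpace ℂ (Fin d) →L[ℂ] ℂ) := fun n => fderiv ℂ (Fn n) z₀ with hDndef
    have hDnb : ∀ n, Dn n ∈ closedBall (0 : EuclideanSpace ℂ (Fin d) →L[ℂ] ℂ) ((2*M+1)/R) := fun n =>
      mem_closedBall_zero_iff.mpr (opnormBound hR hM0 (hdn n) (hbn n))
    haveI hfd : FiniteDimensional ℂ (EuclideanSpace ℂ (Fin d) →L[ℂ] ℂ) := inferInstance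
    haveI : ProperSpace (EuclideanSpace ℂ (Fin d) →L[ℂ] ℂ) :=
      FiniteDimensional.proper ℂ _
    obtain ⟨D, -, hDt⟩ := (isCompact_closedBall (0 : EuclideanSpace ℂ (Fin d) →L[ℂ] ℂ) ((2*M+1)/R)).ultrafilter_le_nhds
      (𝒰.map Dn)
      (by rw [Ultrafilter.coe_map, le_principal_iff, mem_map]; exact univ_mem' hDnb)
    have hDt' : Tendsto Dn (𝒰 : Filter ℕ) (𝓝 D) := hDt
    -- quadratic estimate for the limit
    have hquad : ∀ h : EuclideanSpace ℂ (Fin d), ‖h‖ < R →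
        ‖F (z₀ + h) - F z₀ - D h‖ ≤ (4*M+3)/R^2 * ‖h‖^2 := by
      intro h hh
      rcases eq_or_ne h 0 with rfl | hh0
      · simp
      have hmem1 : z₀ + h ∈ ball c₂ r₂ := hball (by
        rw [mem_ball, dist_eq_norm, add_sub_cancel_left]; exact hh)
      have hmem0 : z₀ ∈ ball c₂ r₂ := hz₀
      have T1 : Tendsto (fun n => Fn n (z₀ + h)) (𝒰 : Filter ℕ) (𝓝 (F (z₀ + h))) :=
        hFt _ hmem1
      have T2 : Tendsto (fun n => Fn n z₀) (𝒰 : Filter ℕ) (𝓝 (F z₀)) := hFt _ hmem0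
      have T3 : Tendsto (fun n => Dn n h) (𝒰 : Filter ℕ) (𝓝 (D h)) :=
        ((ContinuousLinearMap.apply ℂ ℂ h).continuous.tendsto D).comp hDt'
      have Tall : Tendsto (fun n => ‖Fn n (z₀ + h) - Fn n z₀ - Dn n h‖) (𝒰 : Filter ℕ)
          (𝓝 ‖F (z₀ + h) - F z₀ - D h‖) := ((T1.sub T2).sub T3).norm
      refine le_of_tendsto Tall (Eventually.of_forall fun n => ?_)
      have := (sliceQuad hR hM0 (hdn n) (hbn n) hh hh0).2
      calc ‖Fn n (z₀ + h) - Fn n z₀ - Dn n h‖ ≤ (4*M+3)/(R/‖h‖)^2 := this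
        _ = (4*M+3)/R^2 * ‖h‖^2 := by
            rw [div_pow, div_div_eq_mul_div, div_mul_eq_mul_div]
    -- conclude HasFDerivAt
    have hC : (0:ℝ) < (4*M+3)/R^2 := by positivity
    have : HasFDerivAt F D z₀ := by
      rw [hasFDerivAt_iff_isLittleO_nhds_zero]
      rw [Asymptotics.isLittleO_iff]
      intro c hc
      rw [Metric.eventually_nhds_iff]
      refine ⟨min R (c / ((4*M+3)/R^2)), lt_min hR (by positivity), ?_⟩
      intro h hh
      rw [dist_zero_right] at hh
      have hh1 : ‖h‖ < R := lt_of_lt_of_le hh (min_le_left _ _)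
      have hh2 : ‖h‖ ≤ c / ((4*M+3)/R^2) := le_of_lt (lt_of_lt_of_le hh (min_le_right _ _))
      calc ‖F (z₀ + h) - F z₀ - D h‖ ≤ (4*M+3)/R^2 * ‖h‖^2 := hquad h hh1
        _ = (4*M+3)/R^2 * ‖h‖ * ‖h‖ := by ring
        _ ≤ (4*M+3)/R^2 * (c / ((4*M+3)/R^2)) * ‖h‖ := by
            have := norm_nonneg h
            gcongr
        _ = c * ‖h‖ := by field_simp
    exact this.differentiableAt
  · -- equality on the small ball
    intro z hz
    obtain ⟨hz₂, hzΩ⟩ := hsub (ball_subset_closedBall hz)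
    have hι : Tendsto (fun n => ι (g n) z) (𝒰 : Filter ℕ) (𝓝 (ι f z)) :=
      (hptw g f htend z hzΩ).mono_left h𝒰
    have hFn : Tendsto (fun n => Fn n z) (𝒰 : Filter ℕ) (𝓝 (ι f z)) :=
      hι.congr fun n => (hFeq n hz).symm
    exact tendsto_nhds_unique (hFt z hz₂) hFn
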